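/- For θ with c = cos θ ≠ 0, s = sin θ ≠ 0, ∫_0^{|c|} 2|s| / (π(1 - y²)√(c² - y²)) dy = 1; that is, the limit density of X_t^{HL}/t for the half-line quantum walk, namely g(y) = 2|s| / (π(1-y²)√(c²-y²)) · 1_{[0,|c|)}(y), integrates to 1 over ℝ. -/

import Mathlib

open MeasureTheory

theorem half_line_limit_density_integral (θ : ℝ) (hc : Real.cos θ ≠ 0) (hs : Real.sin θ ≠ 0) :
    ∫ y in Set.Ico 0 |Real.cos θ|,
      2 * |Real.sin θ| / (Real.pi * (1 - y ^ 2) * Real.sqrt (Real.cos θ ^ 2 - y ^ 2)) = 1 := by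
  have hπ : (0:ℝ) < Real.pi := Real.pi_pos
  set a := |Real.cos θ| with ha_def
  set S := |Real.sin θ| with hS_def
  have ha0 : 0 < a := abs_pos.mpr hc
  have hS0 : 0 < S := abs_pos.mpr hs
  have ha2 : a ^ 2 = Real.cos θ ^ 2 := sq_abs _
  have hS2 : S ^ 2 = Real.sin θ ^ 2 := sq_abs _
  have hsum : a ^ 2 + S ^ 2 = 1 := by
    rw [ha2, hS2]; exact Real.cos_sq_add_sin_sq θ
  have ha1 : a < 1 := by nlinarith
  set f : ℝ → ℝ := fun y =>
    2 * S / (Real.pi * (1 - y ^ 2) * Real.sqrt (Real.cos θ ^ 2 - y ^ 2)) with hf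
  set F : ℝ → ℝ := fun y =>
    (2 / Real.pi) * Real.arcsin (S * y / (a * Real.sqrt (1 - y ^ 2))) with hF
  have hcont : ContinuousOn F (Set.Icc 0 a) := by
    apply ContinuousOn.mul continuousOn_const
    apply Real.continuous_arcsin.comp_continuousOn
    apply ContinuousOn.div
    · exact (continuous_const.mul continuous_id).continuousOn
    · exact (continuous_const.mul
        ((continuous_const.sub (continuous_pow 2)).sqrt)).continuousOn
    · intro y hy
      have h1 : 0 < 1 - y ^ 2 := by
        obtain ⟨hy0, hya⟩ := hy
        nlinarith
      exact (mul_pos ha0 (Real.sqrt_pos.mpr h1)).ne'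
  have hderiv : ∀ y ∈ Set.Ioo (0:ℝ) a, HasDerivAt F (f y) y := by
    intro y hy
    obtain ⟨hy0, hya⟩ := hy
    have h1 : 0 < 1 - y ^ 2 := by nlinarith
    have h2 : 0 < a ^ 2 - y ^ 2 := by nlinarith
    set t := Real.sqrt (1 - y ^ 2) with ht_def
    have ht0 : 0 < t := Real.sqrt_pos.mpr h1
    have ht2 : t ^ 2 = 1 - y ^ 2 := Real.sq_sqrt h1.le
    have hr0 : 0 < Real.sqrt (a ^ 2 - y ^ 2) := Real.sqrt_pos.mpr h2
    have hr2 : Real.sqrt (a ^ 2 - y ^ 2) ^ 2 = a ^ 2 - y ^ 2 := Real.sq_sqrt h2.le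
    -- derivative of t
    have hu : HasDerivAt (fun y : ℝ => 1 - y ^ 2) (-(2 * y)) y := by
      simpa using (hasDerivAt_pow 2 y).const_sub 1
    have hsq : HasDerivAt (fun y : ℝ => Real.sqrt (1 - y ^ 2))
        (1 / (2 * t) * (-(2 * y))) y :=
      (Real.hasDerivAt_sqrt h1.ne').comp y hu
    -- derivative of g
    have hN : HasDerivAt (fun y : ℝ => S * y) S y := by
      simpa using (hasDerivAt_id y).const_mul S
    have hD : HasDerivAt (fun y : ℝ => a * Real.sqrt (1 - y ^ 2))
        (a * (1 / (2 * t) * (-(2 * y)))) y := hsq.const_mul a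
    have hDne : a * t ≠ 0 := (mul_pos ha0 ht0).ne'
    have hg : HasDerivAt (fun y : ℝ => S * y / (a * Real.sqrt (1 - y ^ 2)))
        ((S * (a * t) - S * y * (a * (1 / (2 * t) * (-(2 * y))))) / (a * t) ^ 2) y :=
      hN.div hD hDne
    -- bounds on g y
    have hgval : S * y / (a * t) < 1 := by
      rw [div_lt_one (mul_pos ha0 ht0)]
      have : (S * y) ^ 2 < (a * t) ^ 2 := by nlinarith
      exact lt_of_pow_lt_pow_left₀ 2 (mul_pos ha0 ht0).le this
    have hgnn : 0 ≤ S * y / (a * t) :=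
      div_nonneg (mul_nonneg hS0.le hy0.le) (mul_pos ha0 ht0).le
    have harcsin : HasDerivAt Real.arcsin
        (1 / Real.sqrt (1 - (S * y / (a * t)) ^ 2)) (S * y / (a * t)) :=
      Real.hasDerivAt_arcsin (by linarith) (ne_of_lt hgval)
    have hFd : HasDerivAt F ((2 / Real.pi) *
        (1 / Real.sqrt (1 - (S * y / (a * t)) ^ 2) *
          ((S * (a * t) - S * y * (a * (1 / (2 * t) * (-(2 * y))))) / (a * t) ^ 2))) y := by
      exact ((harcsin.comp y hg).const_mul (2 / Real.pi))
    convert hFd using 1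
    -- simplify
    have hsimp : Real.sqrt (1 - (S * y / (a * t)) ^ 2)
        = Real.sqrt (a ^ 2 - y ^ 2) / (a * t) := by
      have h3 : 1 - (S * y / (a * t)) ^ 2 = (a ^ 2 - y ^ 2) / (a * t) ^ 2 := by
        field_simp
        nlinarith
      rw [h3, Real.sqrt_div h2.le, Real.sqrt_sq (mul_pos ha0 ht0).le]
    have e : S * (a * t) - S * y * (a * (1 / (2 * t) * -(2 * y))) = S * a / t := by
      rw [eq_div_iff ht0.ne']
      field_simp
      linear_combination ht2
    rw [hf]
    simp only [hsimp, ← ha2, e, one_div_div]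
    rw [← ht2]
    field_simp
  have hnonneg : ∀ y ∈ Set.Ioo (0:ℝ) a, 0 ≤ f y := by
    intro y hy
    obtain ⟨hy0, hya⟩ := hy
    have h1 : 0 < 1 - y ^ 2 := by nlinarith
    apply div_nonneg (by positivity)
    exact mul_nonneg (mul_nonneg hπ.le h1.le) (Real.sqrt_nonneg _)
  have hint : IntegrableOn f (Set.Ioc 0 a) :=
    intervalIntegral.integrableOn_deriv_of_nonneg hcont hderiv hnonneg
  have key : ∫ y in (0:ℝ)..a, f y = F a - F 0 :=
    intervalIntegral.integral_eq_sub_of_hasDerivAt_of_le ha0.le hcont hderiv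
      ((intervalIntegrable_iff_integrableOn_Ioc_of_le ha0.le).mpr hint)
  have hFa : F a = 1 := by
    have h1 : Real.sqrt (1 - a ^ 2) = S := by
      rw [show 1 - a ^ 2 = S ^ 2 by linarith, Real.sqrt_sq hS0.le]
    rw [hF]
    simp only [h1]
    rw [mul_comm a S, div_self (mul_pos hS0 ha0).ne', Real.arcsin_one]
    field_simp
  have hF0 : F 0 = 0 := by
    simp [hF]
  have : ∫ y in Set.Ico 0 a, f y = ∫ y in (0:ℝ)..a, f y := by
    rw [intervalIntegral.integral_of_le ha0.le,
      MeasureTheory.integral_Ico_eq_integral_Ioo,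
      MeasureTheory.integral_Ioc_eq_integral_Ioo]
  rw [this, key, hFa, hF0, sub_zero]
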